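/- With notation as before, the corestriction map ν: F[G_{n-1}] → F[G_n] on the mod-p group algebras of cyclic p-groups is injective; equivalently, for θ ∈ O[G_{n-1}], μ(ν(θ)) = μ(θ), where μ(Σ c_σ σ) = min_σ ord_p(c_σ). -/

import Mathlib

/-- The corestriction map `ν : R[ZMod a] → R[ZMod b]` (for `a ∣ b`) sending a group
element `σ` to the sum of its preimages under the natural surjection
`ZMod b → ZMod a`. -/
noncomputable def cores (R : Type*) [CommRing R] (a b : ℕ) [NeZero a] [NeZero b] (h : a ∣ b)
    (θ : MonoidAlgebra R (Multiplicative (ZMod a))) :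
    MonoidAlgebra R (Multiplicative (ZMod b)) :=
  MonoidAlgebra.ofCoeff (Finsupp.equivFunOnFinite.symm
    (fun τ => θ.coeff (Multiplicative.ofAdd (ZMod.castHom h (ZMod a) (Multiplicative.toAdd τ)))))

/-- The μ-invariant of `θ = Σ c_σ σ ∈ O[ZMod m]`: the minimum of `ord_p(c_σ)`
over all `σ`, where `ord_p` is a given additive valuation. -/
noncomputable def muInv (O : Type*) [CommRing O] (v : AddValuation O (WithTop ℚ))
    (m : ℕ) [NeZero m] (θ : MonoidAlgebra O (Multiplicative (ZMod m))) : WithTop ℚ :=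
  Finset.univ.inf' Finset.univ_nonempty (fun σ : Multiplicative (ZMod m) => v (θ.coeff σ))


lemma cores_apply (R : Type*) [CommRing R] (a b : ℕ) [NeZero a] [NeZero b] (h : a ∣ b)
    (θ : MonoidAlgebra R (Multiplicative (ZMod a))) (τ : Multiplicative (ZMod b)) :
    (cores R a b h θ).coeff τ =
      θ.coeff (Multiplicative.ofAdd (ZMod.castHom h (ZMod a) (Multiplicative.toAdd τ))) := rfl

lemma cores_surj_comp (R : Type*) [CommRing R] (a b : ℕ) [NeZero a] [NeZero b] (h : a ∣ b)
    (σ : Multiplicative (ZMod a)) :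
    ∃ τ : Multiplicative (ZMod b),
      Multiplicative.ofAdd (ZMod.castHom h (ZMod a) (Multiplicative.toAdd τ)) = σ := by
  obtain ⟨x, hx⟩ := ZMod.ringHom_surjective (ZMod.castHom h (ZMod a)) (Multiplicative.toAdd σ)
  exact ⟨Multiplicative.ofAdd x, by simp [hx]⟩

/-- The corestriction map `ν : F[G_{n-1}] → F[G_n]` on mod-`p` group algebras of
cyclic `p`-groups is injective; equivalently, for `θ ∈ O[G_{n-1}]`
(with `O` the ring of integers of a finite extension of `Q_p`, `ord_p`
normalized so `ord_p(p) = 1`), one has `μ(ν(θ)) = μ(θ)`. -/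
theorem cores_injective_and_mu_cores (p : ℕ) (hp : p.Prime) (hodd : Odd p) [NeZero p]
    (n : ℕ) (hn : 1 ≤ n)
    (F : Type*) [Field F] [Fintype F] [CharP F p]
    (O : Type*) [CommRing O] [IsDomain O]
    (v : AddValuation O (WithTop ℚ)) (hvp : v (p : O) = 1) (hnn : ∀ x : O, 0 ≤ v x) :
    Function.Injective
        (cores F (p ^ (n - 1)) (p ^ n) (pow_dvd_pow p (Nat.sub_le n 1))) ∧
      ∀ θ : MonoidAlgebra O (Multiplicative (ZMod (p ^ (n - 1)))),
        muInv O v (p ^ n) (cores O (p ^ (n - 1)) (p ^ n) (pow_dvd_pow p (Nat.sub_le n 1)) θ)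
          = muInv O v (p ^ (n - 1)) θ := by
  constructor
  · intro θ₁ θ₂ hθ
    ext σ
    obtain ⟨τ, hτ⟩ := cores_surj_comp F (p ^ (n - 1)) (p ^ n)
      (pow_dvd_pow p (Nat.sub_le n 1)) σ
    have := congrFun (congrArg (fun f : MonoidAlgebra F (Multiplicative (ZMod (p ^ n))) => (f.coeff : Multiplicative (ZMod (p ^ n)) → F)) hθ) τ
    simp only [cores_apply, hτ] at this
    exact this
  · intro θ
    unfold muInv
    apply le_antisymm
    · apply Finset.le_inf'
      intro σ _
      obtain ⟨τ, hτ⟩ := cores_surj_comp O (p ^ (n - 1)) (p ^ n)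
        (pow_dvd_pow p (Nat.sub_le n 1)) σ
      calc _ ≤ v ((cores O (p ^ (n - 1)) (p ^ n) (pow_dvd_pow p (Nat.sub_le n 1)) θ).coeff τ) :=
            Finset.inf'_le _ (Finset.mem_univ τ)
        _ = v (θ.coeff σ) := by rw [cores_apply, hτ]
    · apply Finset.le_inf'
      intro τ _
      rw [cores_apply]
      exact Finset.inf'_le _ (Finset.mem_univ _)
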